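/- arXiv:1503.06610 — 2 statements merged into one kernel-verified Lean document; each statement's English description precedes it below -/
import Mathlib

section
/- Suppose a foldable word is reduced by a sequence S of (not necessarily adjacent) matchings pairing each position with a position of complementary letter, such that the set of pairs is non-crossing (pairs are properly nested). If positions i and i+1 carry complementary letters and S pairs i with some k < i and i+1 with some l > i+1, then the word obtained by deleting positions i and i+1 is still foldable. -/
def RedStep {α : Type*} (c : α → α) (w w' : List α) : Prop :=
  ∃ (W₁ W₂ : List α) (a : α), w = W₁ ++ a :: c a :: W₂ ∧ w' = W₁ ++ W₂

def Foldable {α : Type*} (c : α → α) (w : List α) : Prop :=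
  Relation.ReflTransGen (RedStep c) w []

def NCMatching {α : Type*} (c : α → α) (w : List α)
    (m : Fin w.length → Fin w.length) : Prop :=
  Function.Involutive m ∧ (∀ i, m i ≠ i) ∧
  (∀ i, w.get (m i) = c (w.get i)) ∧
  ∀ i k : Fin w.length, ¬ (i < k ∧ k < m i ∧ m i < m k)

namespace FoldAux

variable {α : Type*}

lemma len_del (w : List α) (i : ℕ) (hi : i + 1 < w.length) :
    (w.take i ++ w.drop (i + 2)).length = w.length - 2 := by
  simp; omega

lemma get_del (w : List α) (i : ℕ) (hi : i + 1 < w.length)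
    (t : ℕ) (ht : t < (w.take i ++ w.drop (i + 2)).length) :
    (w.take i ++ w.drop (i + 2))[t] =
      w[if t < i then t else t + 2]'(by rw [len_del w i hi] at ht; split <;> omega) := by
  have hlen : (w.take i ++ w.drop (i+2)).length = w.length - 2 := len_del w i hi
  have htake : (w.take i).length = i := by simp; omega
  by_cases h : t < i
  · rw [List.getElem_append_left (by omega)]
    simp only [if_pos h]
    exact List.getElem_take
  · rw [List.getElem_append_right (by omega)]
    simp only [if_neg h, htake]
    rw [List.getElem_drop]
    congr 1
    omega

/-- Deleting an adjacent matched pair preserves having an NC matching. -/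
lemma ncm_delete (c : α → α) (w : List α) (m : Fin w.length → Fin w.length)
    (hm : NCMatching c w m) (i : ℕ) (hi : i + 1 < w.length)
    (hmi : (m ⟨i, Nat.lt_of_succ_lt hi⟩).val = i + 1) :
    ∃ m', NCMatching c (w.take i ++ w.drop (i + 2)) m' := by
  obtain ⟨hinv, hfp, hcomp, hnc⟩ := hm
  set w' := w.take i ++ w.drop (i + 2) with hw'
  have hlen : w'.length = w.length - 2 := len_del w i hi
  have hmi1 : (m ⟨i+1, hi⟩).val = i := by
    have h0 := hinv ⟨i, Nat.lt_of_succ_lt hi⟩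
    have he : m ⟨i, Nat.lt_of_succ_lt hi⟩ = ⟨i+1, hi⟩ := Fin.ext hmi
    rw [he] at h0
    exact congrArg Fin.val h0
  have hemb : ∀ t : Fin w'.length, (if t.val < i then t.val else t.val + 2) < w.length := by
    intro t; have := t.2; split <;> omega
  set e : Fin w'.length → Fin w.length := fun t => ⟨if t.val < i then t.val else t.val + 2, hemb t⟩
    with he
  have heval : ∀ t, (e t).val = if t.val < i then t.val else t.val + 2 := fun t => rfl
  have hene : ∀ t, (e t).val ≠ i ∧ (e t).val ≠ i + 1 := by
    intro t; rw [heval]; split <;> omega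
  have einj : ∀ a b, e a = e b → a = b := by
    intro a b h
    have hh := congrArg Fin.val h
    rw [heval, heval] at hh
    apply Fin.ext
    by_cases h1 : a.val < i <;> by_cases h2 : b.val < i <;>
      simp only [h1, h2, if_pos, if_neg, if_true, if_false] at hh <;> omega
  have hme : ∀ t : Fin w'.length, (m (e t)).val ≠ i ∧ (m (e t)).val ≠ i + 1 := by
    intro t
    constructor
    · intro h
      have h1 : m (e t) = m ⟨i+1, hi⟩ := Fin.ext (by rw [h, hmi1])
      have h2 := hinv.injective h1
      exact (hene t).2 (congrArg Fin.val h2)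
    · intro h
      have h1 : m (e t) = m ⟨i, Nat.lt_of_succ_lt hi⟩ := Fin.ext (by rw [h, hmi])
      have h2 := hinv.injective h1
      exact (hene t).1 (congrArg Fin.val h2)
  have hproj : ∀ t : Fin w'.length,
      (if (m (e t)).val < i then (m (e t)).val else (m (e t)).val - 2) < w'.length := by
    intro t
    have h1 := (m (e t)).2
    have h2 := hme t
    split <;> omega
  set m' : Fin w'.length → Fin w'.length := fun t =>
    ⟨if (m (e t)).val < i then (m (e t)).val else (m (e t)).val - 2, hproj t⟩ with hm'
  have hm'val : ∀ t, (m' t).val = if (m (e t)).val < i then (m (e t)).val else (m (e t)).val - 2 :=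
    fun t => rfl
  have hepm : ∀ t, e (m' t) = m (e t) := by
    intro t
    have h2 := hme t
    apply Fin.ext
    rw [heval, hm'val]
    rcases Nat.lt_or_ge (m (e t)).val i with hA | hA
    · rw [if_pos hA, if_pos hA]
    · rw [if_neg (show ¬ (m (e t)).val < i by omega), if_neg (by omega)]
      omega
  have hget : ∀ t : Fin w'.length, w'.get t = w.get (e t) := by
    intro t
    simp only [List.get_eq_getElem]
    exact get_del w i hi t.val t.2
  refine ⟨m', ?_, ?_, ?_, ?_⟩
  · intro t
    refine einj _ _ ?_
    rw [hepm, hepm t, hinv]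
  · intro t hcon
    have h1 := congrArg e hcon
    rw [hepm t] at h1
    exact hfp (e t) h1
  · intro t
    rw [hget, hget, hepm t]
    exact hcomp (e t)
  · intro p q ⟨h1, h2, h3⟩
    have hmono : ∀ a b : Fin w'.length, a < b → (e a).val < (e b).val := by
      intro a b hab
      have hv : a.val < b.val := hab
      rw [heval, heval]
      by_cases h1 : a.val < i <;> by_cases h2 : b.val < i <;>
        simp only [h1, h2, if_pos, if_neg, if_true, if_false] <;> omega
    have e1 : (e p).val < (e q).val := hmono p q h1
    have e2 : (e q).val < (m (e p)).val := by
      have hh := hmono q (m' p) h2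
      rw [hepm p] at hh; exact hh
    have e3 : (m (e p)).val < (m (e q)).val := by
      have hh := hmono (m' p) (m' q) h3
      rw [hepm p, hepm q] at hh; exact hh
    exact hnc (e p) (e q) ⟨Fin.lt_def.mpr e1, Fin.lt_def.mpr e2, Fin.lt_def.mpr e3⟩

/-- Any word with an NC matching is foldable. -/
lemma foldable_of_ncm (c : α → α) :
    ∀ n (w : List α), w.length = n → (∃ m, NCMatching c w m) → Foldable c w := by
  intro n
  induction n using Nat.strong_induction_on with
  | _ n ih =>
    intro w hlen ⟨m, hm⟩
    obtain ⟨hinv, hfp, hcomp, hnc⟩ := hm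
    rcases w.eq_nil_or_concat with rfl | hne
    · exact Relation.ReflTransGen.refl
    have hpos : 0 < w.length := by
      obtain ⟨_, _, rfl⟩ := hne; simp
    -- find an innermost pair: j with m j = j + 1
    have hP : ∃ d, ∃ j : Fin w.length, j.val < (m j).val ∧ (m j).val - j.val = d := by
      set j0 : Fin w.length := ⟨0, hpos⟩
      have : (0:ℕ) < (m j0).val := by
        rcases Nat.eq_zero_or_pos (m j0).val with h | h
        · exact absurd (Fin.ext h) (hfp j0)
        · exact h
      exact ⟨(m j0).val - 0, j0, this, rfl⟩
    classical
    obtain ⟨j, hj1, hj2⟩ := Nat.find_spec hP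
    set d := Nat.find hP with hd
    have hncv : ∀ a b : Fin w.length, a.val < b.val → b.val < (m a).val →
        (m b).val ≤ (m a).val := by
      intro a b ha hb
      by_contra hcc
      push_neg at hcc
      exact hnc a b ⟨Fin.lt_def.mpr ha, Fin.lt_def.mpr hb, Fin.lt_def.mpr hcc⟩
    have hd1 : d = 1 := by
      by_contra hcon
      have hd2 : 2 ≤ d := by omega
      have hj1n : j.val + 1 < w.length := by have := (m j).2; omega
      set J1 : Fin w.length := ⟨j.val+1, hj1n⟩ with hJ1
      have hJ1v : J1.val = j.val + 1 := rfl
      have hq1 : (m J1).val ≠ j.val + 1 := fun h => hfp J1 (Fin.ext (h.trans hJ1v.symm))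
      have hqj : (m J1).val ≠ j.val := by
        intro h
        have h2 : m (m J1) = m j := congrArg m (Fin.ext h)
        rw [hinv J1] at h2
        have := congrArg Fin.val h2
        omega
      have hqm : (m J1).val ≠ (m j).val := by
        intro h
        have h2 := hinv.injective (Fin.ext h : m J1 = m j)
        have := congrArg Fin.val h2
        omega
      rcases Nat.lt_or_ge (m J1).val (j.val + 1) with hlt | hge
      · have hmq : m (m J1) = J1 := hinv J1
        have := hncv (m J1) j (by omega) (by rw [hmq]; omega)
        rw [hmq] at this
        omega
      · have hgt : j.val + 1 < (m J1).val := by omega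
        have hqlt : (m J1).val < (m j).val := by
          have := hncv j J1 (by omega) (by omega)
          omega
        have hmin : ¬ ∃ j' : Fin w.length,
            j'.val < (m j').val ∧ (m j').val - j'.val = (m J1).val - (j.val+1) :=
          Nat.find_min hP (by rw [← hd]; omega)
        exact hmin ⟨J1, by omega, by rw [hJ1v]⟩
    -- now m j = j + 1
    have hj1n : j.val + 1 < w.length := by have := (m j).2; omega
    have hmj : (m j).val = j.val + 1 := by omega
    -- reduction step
    have hsplit : w = w.take j.val ++ w[j.val] :: (c w[j.val]) :: w.drop (j.val + 2) := by
      have h1 : w.drop j.val = w[j.val] :: w.drop (j.val+1) := List.drop_eq_getElem_cons j.2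
      have h2 : w.drop (j.val+1) = w[j.val+1] :: w.drop (j.val+2) := List.drop_eq_getElem_cons hj1n
      have h3 : w[j.val + 1]'hj1n = c w[j.val] := by
        have := hcomp j
        simp only [List.get_eq_getElem] at this
        rw [show (m j) = ⟨j.val+1, hj1n⟩ from Fin.ext hmj] at this
        exact this
      conv_lhs => rw [← List.take_append_drop j.val w]
      rw [h1, h2, h3]
    have hred : RedStep c w (w.take j.val ++ w.drop (j.val + 2)) :=
      ⟨w.take j.val, w.drop (j.val + 2), w[j.val], hsplit, rfl⟩
    have hfold : Foldable c (w.take j.val ++ w.drop (j.val + 2)) := by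
      refine ih (n - 2) (by omega) _ ?_ ?_
      · rw [len_del w j.val hj1n, hlen]
      · exact ncm_delete c w m ⟨hinv, hfp, hcomp, hnc⟩ j.val hj1n
          (by rw [show (⟨j.val, Nat.lt_of_succ_lt hj1n⟩ : Fin w.length) = j from Fin.ext rfl]; exact hmj)
    exact Relation.ReflTransGen.head hred hfold

end FoldAux

/-- If a word admits a perfect non-crossing complementary matching, positions i and i+1
carry complementary letters, and the matching pairs i with some k < i and i+1 with some
l > i+1, then the word obtained by deleting positions i and i+1 is still foldable. -/
theorem foldable_delete_adjacent {α : Type*} (c : α → α)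
    (hinv : Function.Involutive c) (hfp : ∀ a, c a ≠ a)
    (w : List α) (m : Fin w.length → Fin w.length) (hm : NCMatching c w m)
    (i : ℕ) (hi : i + 1 < w.length)
    (hcomp : w.get ⟨i + 1, hi⟩ = c (w.get ⟨i, Nat.lt_of_succ_lt hi⟩))
    (hk : (m ⟨i, Nat.lt_of_succ_lt hi⟩).val < i)
    (hl : i + 1 < (m ⟨i + 1, hi⟩).val) :
    Foldable c (w.take i ++ w.drop (i + 2)) := by
  classical
  obtain ⟨hminv, hmfp, hmc, hnc⟩ := hm
  set I : Fin w.length := ⟨i, Nat.lt_of_succ_lt hi⟩ with hI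
  set I1 : Fin w.length := ⟨i+1, hi⟩ with hI1
  set K := m I with hK
  set L := m I1 with hL
  have hmK : m K = I := hminv I
  have hmL : m L = I1 := hminv I1
  have hKI : K.val < i := hk
  have hLI : i + 1 < L.val := hl
  have hKL : K.val < L.val := by omega
  -- the rewired matching
  set m'' : Fin w.length → Fin w.length := fun x =>
    if x = I then I1 else if x = I1 then I else if x = K then L else if x = L then K else m x
    with hm''
  have hval : ∀ x : Fin w.length, x ≠ I → x ≠ I1 → x ≠ K → x ≠ L → m'' x = m x := by
    intro x h1 h2 h3 h4
    simp only [hm'', if_neg h1, if_neg h2, if_neg h3, if_neg h4]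
  have hIv : I.val = i := rfl
  have hI1v : I1.val = i + 1 := rfl
  have hII1 : I ≠ I1 := by intro h; have h2 := congrArg Fin.val h; omega
  have hne4 : ∀ x : Fin w.length, x ≠ I → x ≠ I1 → x ≠ K → x ≠ L →
      m x ≠ I ∧ m x ≠ I1 ∧ m x ≠ K ∧ m x ≠ L := by
    intro x h1 h2 h3 h4
    refine ⟨?_, ?_, ?_, ?_⟩ <;> intro h
    · exact h3 (hminv.injective (h.trans hmK.symm))
    · exact h4 (hminv.injective (h.trans hmL.symm))
    · exact h1 (hminv.injective (h.trans hK))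
    · exact h2 (hminv.injective (h.trans hL))
  have hmIval : m'' I = I1 := by simp [hm'']
  have hmI1val : m'' I1 = I := by simp [hm'', if_neg hII1.symm]
  have hKneI : K ≠ I := by intro h; have h2 := congrArg Fin.val h; omega
  have hKneI1 : K ≠ I1 := by intro h; have h2 := congrArg Fin.val h; omega
  have hLneI : L ≠ I := by intro h; have h2 := congrArg Fin.val h; omega
  have hLneI1 : L ≠ I1 := by intro h; have h2 := congrArg Fin.val h; omega
  have hKneL : K ≠ L := by intro h; have h2 := congrArg Fin.val h; omega
  have hmKval : m'' K = L := by simp [hm'', if_neg hKneI, if_neg hKneI1]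
  have hmLval : m'' L = K := by simp [hm'', if_neg hLneI, if_neg hLneI1, if_neg hKneL.symm]
  have hncm : NCMatching c w m'' := by
    refine ⟨?_, ?_, ?_, ?_⟩
    · intro x
      by_cases h1 : x = I
      · rw [h1, hmIval, hmI1val]
      by_cases h2 : x = I1
      · rw [h2, hmI1val, hmIval]
      by_cases h3 : x = K
      · rw [h3, hmKval, hmLval]
      by_cases h4 : x = L
      · rw [h4, hmLval, hmKval]
      rw [hval x h1 h2 h3 h4]
      obtain ⟨n1, n2, n3, n4⟩ := hne4 x h1 h2 h3 h4
      rw [hval (m x) n1 n2 n3 n4, hminv x]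
    · intro x
      by_cases h1 : x = I
      · rw [h1, hmIval]; exact hII1.symm
      by_cases h2 : x = I1
      · rw [h2, hmI1val]; exact hII1
      by_cases h3 : x = K
      · rw [h3, hmKval]; exact hKneL.symm
      by_cases h4 : x = L
      · rw [h4, hmLval]; exact hKneL
      rw [hval x h1 h2 h3 h4]; exact hmfp x
    · intro x
      have hwL : w.get L = w.get I := by
        rw [hL, hmc I1]
        rw [show w.get I1 = c (w.get I) from hcomp, hinv]
      have hwK : w.get K = c (w.get I) := hmc I
      by_cases h1 : x = I
      · rw [h1, hmIval]; exact hcomp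
      by_cases h2 : x = I1
      · rw [h2, hmI1val]
        rw [show w.get I1 = c (w.get I) from hcomp, hinv]
      by_cases h3 : x = K
      · rw [h3, hmKval, hwL, hwK, hinv]
      by_cases h4 : x = L
      · rw [h4, hmLval, hwK, hwL]
      rw [hval x h1 h2 h3 h4]; exact hmc x
    · intro p q ⟨h1, h2, h3⟩
      -- translate everything to values
      have hlt : ∀ a b : Fin w.length, a < b ↔ a.val < b.val := fun a b => Fin.lt_def
      -- old noncrossing in value form
      have hncv : ∀ a b : Fin w.length, a.val < b.val → b.val < (m a).val → (m b).val ≤ (m a).val := by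
        intro a b ha hb
        by_contra hcc
        push_neg at hcc
        exact hnc a b ⟨Fin.lt_def.mpr ha, Fin.lt_def.mpr hb, Fin.lt_def.mpr hcc⟩
      by_cases hp1 : p = I
      · rw [hp1, hmIval] at h2 h3
        rw [hp1] at h1
        have ha := Fin.lt_def.mp h1; have hb := Fin.lt_def.mp h2; omega
      by_cases hp2 : p = I1
      · rw [hp2, hmI1val] at h2
        rw [hp2] at h1
        have ha := Fin.lt_def.mp h1; have hb := Fin.lt_def.mp h2; omega
      by_cases hp4 : p = L
      · rw [hp4, hmLval] at h2
        rw [hp4] at h1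
        have ha := Fin.lt_def.mp h1; have hb := Fin.lt_def.mp h2; omega
      by_cases hp3 : p = K
      · -- p = K, m'' p = L : q with K < q < L and L < m'' q
        rw [hp3, hmKval] at h2 h3
        rw [hp3] at h1
        have hqK := Fin.lt_def.mp h1
        have hqL := Fin.lt_def.mp h2
        by_cases hq1 : q = I
        · rw [hq1, hmIval] at h3; have hb := Fin.lt_def.mp h3; omega
        by_cases hq2 : q = I1
        · rw [hq2, hmI1val] at h3; have hb := Fin.lt_def.mp h3; omega
        by_cases hq3 : q = K
        · rw [hq3] at h1; exact lt_irrefl _ h1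
        by_cases hq4 : q = L
        · rw [hq4] at hqL; omega
        rw [hval q hq1 hq2 hq3 hq4] at h3
        have hLmq := Fin.lt_def.mp h3
        have hqvi : q.val ≠ i := fun h => hq1 (Fin.ext h)
        have hqvi1 : q.val ≠ i + 1 := fun h => hq2 (Fin.ext h)
        rcases Nat.lt_or_ge q.val i with hc | hc
        · -- old NC on (K, q): K < q < m K = I ⇒ m q ≤ I
          have := hncv K q hqK (by rw [hmK]; exact hc)
          rw [hmK] at this; omega
        · have hc2 : i + 1 < q.val := by omega
          -- old NC on (I1, q): I1 < q < m I1 = L ⇒ m q ≤ L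
          have := hncv I1 q (by omega) (by rw [← hL]; omega)
          rw [← hL] at this; omega
      -- p generic
      rw [hval p hp1 hp2 hp3 hp4] at h2 h3
      by_cases hq1 : q = I
      · rw [hq1, hmIval] at h3
        rw [hq1] at h2
        have ha := Fin.lt_def.mp h2; have hb := Fin.lt_def.mp h3; omega
      by_cases hq2 : q = I1
      · rw [hq2, hmI1val] at h3
        rw [hq2] at h2
        have ha := Fin.lt_def.mp h2; have hb := Fin.lt_def.mp h3; omega
      by_cases hq4 : q = L
      · rw [hq4, hmLval] at h3
        rw [hq4] at h2
        have := Fin.lt_def.mp h2; have := Fin.lt_def.mp h3; omega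
      by_cases hq3 : q = K
      · -- q = K : p < K, K < m p, m p < L
        rw [hq3, hmKval] at h3
        rw [hq3] at h2
        have hpK := Fin.lt_def.mp h1
        have h1v : p.val < K.val := by rw [hq3] at h1; exact Fin.lt_def.mp h1
        have h2v : K.val < (m p).val := Fin.lt_def.mp h2
        have h3v : (m p).val < L.val := Fin.lt_def.mp h3
        have hmpI : m p ≠ I := (hne4 p hp1 hp2 hp3 hp4).1
        have hmpI1 : m p ≠ I1 := (hne4 p hp1 hp2 hp3 hp4).2.1
        have hmpvi : (m p).val ≠ i := fun h => hmpI (Fin.ext h)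
        have hmpvi1 : (m p).val ≠ i + 1 := fun h => hmpI1 (Fin.ext h)
        rcases Nat.lt_or_ge (m p).val i with hc | hc
        · -- old NC (p, K): p < K < m p ⇒ m K = I ≤ m p? no: m K ≤ m p... 
          have := hncv p K h1v h2v
          rw [hmK] at this; omega
        · have hc2 : i + 1 < (m p).val := by omega
          -- old NC (p, I1): p < I1 < m p ⇒ m I1 = L ≤ m p
          have := hncv p I1 (by omega) (by omega)
          rw [← hL] at this; omega
      rw [hval q hq1 hq2 hq3 hq4] at h3
      exact hnc p q ⟨h1, h2, h3⟩
  -- now we have m'' with m'' I = I1; delete and fold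
  have hdel := FoldAux.ncm_delete c w m'' hncm i hi (by
    rw [show (⟨i, Nat.lt_of_succ_lt hi⟩ : Fin w.length) = I from rfl, hmIval])
  exact FoldAux.foldable_of_ncm c _ _ rfl hdel
end

section
/- If a cyclic word (word considered up to cyclic rotation) admits some linearization that is foldable, then deleting any pair of adjacent complementary letters (adjacency taken cyclically) yields a cyclic word that again admits a foldable linearization. -/
section Aux

variable {α : Type*} [LinearOrder α] (c : α → α)

/-- Orientation map into the alphabet of the free group. -/
noncomputable def ori (x : α) : α × Bool :=
  if x < c x then (x, true) else (c x, false)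

variable {c}

theorem ori_c (hinv : Function.Involutive c) (hfp : ∀ a, c a ≠ a) (x : α) :
    ori c (c x) = ((ori c x).1, !(ori c x).2) := by
  unfold ori
  rcases lt_trichotomy x (c x) with h | h | h
  · rw [if_pos h, if_neg (by rw [hinv]; exact not_lt.2 h.le)]
    simp [if_pos h, hinv x]
  · exact absurd h.symm (hfp x)
  · rw [if_neg (not_lt.2 h.le), if_pos (by rw [hinv]; exact h)]
    simp [if_neg (not_lt.2 h.le)]

theorem ori_inj (hinv : Function.Involutive c) (hfp : ∀ a, c a ≠ a) :
    Function.Injective (ori c) := by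
  intro x y hxy
  unfold ori at hxy
  split_ifs at hxy with h1 h2 h2
  · exact (Prod.ext_iff.1 hxy).1
  · simpa using (Prod.ext_iff.1 hxy).2
  · simpa using (Prod.ext_iff.1 hxy).2
  · have h := (Prod.ext_iff.1 hxy).1
    have h' := congrArg c h
    rwa [hinv, hinv] at h'

theorem redstep_map (hinv : Function.Involutive c) (hfp : ∀ a, c a ≠ a)
    {w w' : List α} (h : RedStep c w w') :
    FreeGroup.Red.Step (w.map (ori c)) (w'.map (ori c)) := by
  obtain ⟨W₁, W₂, a, rfl, rfl⟩ := h
  rw [List.map_append, List.map_cons, List.map_cons, List.map_append,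
    ori_c hinv hfp]
  exact FreeGroup.Red.Step.not

theorem map_redstep (hinv : Function.Involutive c) (hfp : ∀ a, c a ≠ a)
    {N M : List (α × Bool)} (h : FreeGroup.Red.Step N M) :
    ∀ w : List α, N = w.map (ori c) →
      ∃ w', M = w'.map (ori c) ∧ RedStep c w w' := by
  cases h with
  | @not L₁ L₂ x b =>
    induction L₁ with
    | nil =>
      intro w heq
      match w, heq with
      | [], heq => simp at heq
      | [u], heq => simp at heq
      | u :: v :: w₂, heq =>
        simp only [List.map_cons, List.nil_append, List.cons.injEq] at heq
        obtain ⟨hu, hv, hw⟩ := heq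
        have hvc : v = c u := by
          apply ori_inj hinv hfp
          rw [ori_c hinv hfp, ← hv, ← hu]
        refine ⟨w₂, hw, [], w₂, u, ?_, rfl⟩
        simp [hvc]
    | cons p L₁ ih =>
      intro w heq
      match w, heq with
      | [], heq => simp at heq
      | u :: w₂, heq =>
        simp only [List.map_cons, List.cons_append, List.cons.injEq] at heq
        obtain ⟨hu, hw⟩ := heq
        obtain ⟨w', hw', W₁, W₂, a, h1, h2⟩ := ih w₂ hw
        exact ⟨u :: w', by simp [hw', hu], u :: W₁, W₂, a, by simp [h1], by simp [h2]⟩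

theorem red_to_foldable (hinv : Function.Involutive c) (hfp : ∀ a, c a ≠ a)
    {L : List (α × Bool)} (h : FreeGroup.Red L []) :
    ∀ w : List α, L = w.map (ori c) → Foldable c w := by
  refine Relation.ReflTransGen.head_induction_on
    (motive := fun L _ => ∀ w : List α, L = w.map (ori c) → Foldable c w) h ?_ ?_
  · intro w hw
    have : w = [] := by simpa using hw.symm
    subst this
    exact Relation.ReflTransGen.refl
  · intro L M hstep _ ih w hw
    obtain ⟨w', hM, hr⟩ := map_redstep hinv hfp (hw ▸ hstep) w rfl
    exact Relation.ReflTransGen.head hr (ih w' hM)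

theorem foldable_iff (hinv : Function.Involutive c) (hfp : ∀ a, c a ≠ a)
    (w : List α) :
    Foldable c w ↔ FreeGroup.mk (w.map (ori c)) = 1 := by
  constructor
  · intro h
    have key : ∀ {v b : List α}, Relation.ReflTransGen (RedStep c) v b →
        FreeGroup.Red (v.map (ori c)) (b.map (ori c)) := by
      intro v b h
      induction h with
      | refl => exact Relation.ReflTransGen.refl
      | tail _ hlast ih =>
        exact Relation.ReflTransGen.tail ih (redstep_map hinv hfp hlast)
    have hred : FreeGroup.Red (w.map (ori c)) ([] : List (α × Bool)) := key h
    rw [FreeGroup.one_eq_mk]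
    exact FreeGroup.Red.exact.2 ⟨[], hred, Relation.ReflTransGen.refl⟩
  · intro h
    rw [FreeGroup.one_eq_mk] at h
    obtain ⟨L, hL1, hL2⟩ := FreeGroup.Red.exact.1 h
    rw [FreeGroup.Red.nil_iff] at hL2
    subst hL2
    exact red_to_foldable hinv hfp hL1 w rfl

end Aux

/-- If some linearization (rotation) of a cyclic word is foldable, then deleting any
cyclically adjacent pair of complementary letters yields a cyclic word that again has
a foldable linearization. Here the rotation `w.rotate s = a :: c a :: u` exhibits the
cyclically adjacent complementary pair, and `u` is the cyclic word after deletion. -/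
theorem cyclic_foldable_delete {α : Type*} (c : α → α)
    (hinv : Function.Involutive c) (hfp : ∀ a, c a ≠ a)
    (w u : List α) (a : α) (s : ℕ)
    (hrot : w.rotate s = a :: c a :: u)
    (hfold : ∃ r, Foldable c (w.rotate r)) :
    ∃ r, Foldable c (u.rotate r) := by
  letI : LinearOrder α := IsWellOrder.linearOrder WellOrderingRel
  obtain ⟨r, hr⟩ := hfold
  set π : List α → FreeGroup α := fun v => FreeGroup.mk (v.map (ori c)) with hπ
  have hmul : ∀ x y : List α, π (x ++ y) = π x * π y := by
    intro x y
    simp [hπ, List.map_append, FreeGroup.mul_mk]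
  -- π of any rotation is a conjugate of π of the word
  have hrotone : ∀ (v : List α) (n : ℕ), π (v.rotate n) = 1 ↔ π v = 1 := by
    intro v n
    rw [← List.rotate_mod]
    rcases Nat.eq_zero_or_pos v.length with h0 | hpos
    · rw [List.length_eq_zero_iff.1 h0]; simp [List.rotate_nil]
    have hlt : n % v.length < v.length := Nat.mod_lt _ hpos
    rw [List.rotate_eq_drop_append_take hlt.le, hmul]
    conv_rhs => rw [← List.take_append_drop (n % v.length) v, hmul]
    constructor
    · intro h
      have := congrArg (fun g => π (v.take (n % v.length)) * g *
        (π (v.take (n % v.length)))⁻¹) h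
      simpa [mul_assoc] using this
    · intro h
      have := congrArg (fun g => (π (v.take (n % v.length)))⁻¹ * g *
        π (v.take (n % v.length))) h
      simpa [mul_assoc] using this
  have hw1 : π w = 1 := (hrotone w r).1 ((foldable_iff hinv hfp _).1 hr)
  have hs1 : π (a :: c a :: u) = 1 := by
    rw [← hrot]; exact (hrotone w s).2 hw1
  have hpair : π ([a, c a]) = 1 := by
    rw [FreeGroup.one_eq_mk]
    apply FreeGroup.Red.exact.2
    refine ⟨[], ?_, Relation.ReflTransGen.refl⟩
    apply Relation.ReflTransGen.single
    show FreeGroup.Red.Step [ori c a, ori c (c a)] []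
    rw [ori_c hinv hfp]
    exact FreeGroup.Red.Step.cons_not
  have hu1 : π u = 1 := by
    have : π ([a, c a] ++ u) = 1 := hs1
    rw [hmul, hpair, one_mul] at this
    exact this
  exact ⟨0, by rw [List.rotate_zero]; exact (foldable_iff hinv hfp u).2 hu1⟩
end
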